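/- Maximality in the two-block case: let Z, Z̄ ∈ ℂ^{p×M} and let S, S̄ ∈ ℂ^{p×p} be positive definite. If Z† S^{-1} Z = Z̄† S̄^{-1} Z̄, then there exists an invertible matrix G ∈ GL(p, ℂ) such that Z = G Z̄ and S = G S̄ G†. -/

import Mathlib

open Matrix
open scoped ComplexOrder InnerProductSpace

private lemma dot_aux {p q : ℕ} (C D : Matrix (Fin p) (Fin q) ℂ) (x y : Fin q → ℂ) :
    star (C *ᵥ x) ⬝ᵥ (D *ᵥ y) = star x ⬝ᵥ ((Cᴴ * D) *ᵥ y) := by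
  simp [star_mulVec, dotProduct_mulVec, vecMul_vecMul]

private lemma inner_toEuclideanLin {p q : ℕ} (C D : Matrix (Fin p) (Fin q) ℂ)
    (x y : EuclideanSpace ℂ (Fin q)) :
    ⟪Matrix.toEuclideanLin C x, Matrix.toEuclideanLin D y⟫_ℂ
      = star (WithLp.equiv 2 _ x) ⬝ᵥ ((Cᴴ * D) *ᵥ (WithLp.equiv 2 _ y)) := by
  rw [← dot_aux]
  simp [Matrix.toEuclideanLin_apply, PiLp.inner_apply, dotProduct, RCLike.inner_apply,
    mul_comm]

private lemma toEuclideanLin_mul {p q r : ℕ} (C : Matrix (Fin p) (Fin q) ℂ)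
    (D : Matrix (Fin q) (Fin r) ℂ) :
    Matrix.toEuclideanLin (C * D)
      = (Matrix.toEuclideanLin C) ∘ₗ (Matrix.toEuclideanLin D) := by
  apply LinearMap.ext
  intro x
  simp [Matrix.toEuclideanLin_apply, Matrix.mulVec_mulVec]

private lemma exists_unitary {p M : ℕ} (A B : Matrix (Fin p) (Fin M) ℂ)
    (h : Aᴴ * A = Bᴴ * B) :
    ∃ U : Matrix (Fin p) (Fin p) ℂ, Uᴴ * U = 1 ∧ U * Uᴴ = 1 ∧ A = U * B := by
  classical
  set fA := Matrix.toEuclideanLin A with hfA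
  set fB := Matrix.toEuclideanLin B with hfB
  have hinner : ∀ x y : EuclideanSpace ℂ (Fin M), ⟪fA x, fA y⟫_ℂ = ⟪fB x, fB y⟫_ℂ := by
    intro x y
    rw [hfA, hfB, inner_toEuclideanLin, inner_toEuclideanLin, h]
  have hker : LinearMap.ker fB ≤ LinearMap.ker fA := by
    intro x hx
    rw [LinearMap.mem_ker] at hx ⊢
    rw [← inner_self_eq_zero (𝕜 := ℂ), hinner x x, hx, inner_zero_left]
  let L0 : LinearMap.range fB →ₗ[ℂ] EuclideanSpace ℂ (Fin p) :=
    ((LinearMap.ker fB).liftQ fA hker) ∘ₗ (fB.quotKerEquivRange.symm : _ →ₗ[ℂ] _)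
  have hL0 : ∀ x : EuclideanSpace ℂ (Fin M),
      L0 ⟨fB x, LinearMap.mem_range_self _ x⟩ = fA x := by
    intro x
    have h1 : fB.quotKerEquivRange.symm ⟨fB x, LinearMap.mem_range_self _ x⟩
        = Submodule.Quotient.mk x := by
      rw [fB.quotKerEquivRange_symm_apply_image x]
      rfl
    simp only [L0, LinearMap.comp_apply, LinearEquiv.coe_coe, h1, Submodule.liftQ_apply]
  have hnorm : ∀ s : LinearMap.range fB, ‖L0 s‖ = ‖s‖ := by
    rintro ⟨-, x, rfl⟩
    rw [hL0]
    have h1 : ‖fA x‖ = ‖fB x‖ := by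
      rw [@norm_eq_sqrt_re_inner ℂ, @norm_eq_sqrt_re_inner ℂ, hinner x x]
    rw [h1]
    rfl
  let L : LinearMap.range fB →ₗᵢ[ℂ] EuclideanSpace ℂ (Fin p) := ⟨L0, hnorm⟩
  let Uiso := L.extend
  have hUapp : ∀ x, Uiso (fB x) = fA x := by
    intro x
    have h2 := L.extend_apply ⟨fB x, LinearMap.mem_range_self _ x⟩
    rw [h2]
    exact hL0 x
  let U : Matrix (Fin p) (Fin p) ℂ := Matrix.toEuclideanLin.symm Uiso.toLinearMap
  have hUlin : Matrix.toEuclideanLin U = Uiso.toLinearMap :=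
    Matrix.toEuclideanLin.apply_symm_apply _
  have hAUB : A = U * B := by
    apply Matrix.toEuclideanLin.injective
    rw [toEuclideanLin_mul, hUlin, ← hfA, ← hfB]
    apply LinearMap.ext
    intro x
    exact (hUapp x).symm
  have hdot : ∀ x y : Fin p → ℂ, star x ⬝ᵥ ((Uᴴ * U) *ᵥ y) = star x ⬝ᵥ y := by
    intro x y
    have h6 : ∀ v, Matrix.toEuclideanLin U v = Uiso v := fun v => by rw [hUlin]; rfl
    have h3 := Uiso.inner_map_map ((WithLp.equiv 2 _).symm x) ((WithLp.equiv 2 _).symm y)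
    simp only [← h6] at h3
    rw [inner_toEuclideanLin] at h3
    simp only [Equiv.apply_symm_apply] at h3
    rw [h3]
    simp [PiLp.inner_apply, dotProduct, RCLike.inner_apply, mul_comm]
  have hU1 : Uᴴ * U = 1 := by
    ext i j
    have h4 := hdot (Pi.single i 1 : Fin p → ℂ) (Pi.single j 1 : Fin p → ℂ)
    have h5 : star (Pi.single i 1 : Fin p → ℂ) = (Pi.single i 1 : Fin p → ℂ) := by
      ext k
      simp [Pi.single_apply, apply_ite]
    rw [h5] at h4
    simpa [single_dotProduct, Matrix.mulVec_single, Matrix.one_apply,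
      Pi.single_apply, eq_comm] using h4
  exact ⟨U, hU1, mul_eq_one_comm.mp hU1, hAUB⟩

/-- Maximality in the two-block case: if Zᴴ S⁻¹ Z = Z̄ᴴ S̄⁻¹ Z̄ then (Z,S) and (Z̄,S̄)
lie in the same orbit of the action (Z,S) ↦ (GZ, G S Gᴴ) of GL(p,ℂ). -/
theorem stmt4 (p M : ℕ) (hp : 1 ≤ p)
    (Z Zb : Matrix (Fin p) (Fin M) ℂ) (S Sb : Matrix (Fin p) (Fin p) ℂ)
    (hS : S.PosDef) (hSb : Sb.PosDef)
    (h : Zᴴ * S⁻¹ * Z = Zbᴴ * Sb⁻¹ * Zb) :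
    ∃ G : Matrix (Fin p) (Fin p) ℂ, IsUnit G.det ∧ Z = G * Zb ∧ S = G * Sb * Gᴴ := by
  classical
  set R := (open scoped MatrixOrder in CFC.sqrt S) with hRdef
  set Rb := (open scoped MatrixOrder in CFC.sqrt Sb) with hRbdef
  have hRH : Rᴴ = R := (open scoped MatrixOrder in (CFC.sqrt_nonneg S).posSemidef.1)
  have hRbH : Rbᴴ = Rb := (open scoped MatrixOrder in (CFC.sqrt_nonneg Sb).posSemidef.1)
  have hRm : R * R = S := (open scoped MatrixOrder in CFC.sqrt_mul_sqrt_self S hS.posSemidef.nonneg)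
  have hRbm : Rb * Rb = Sb := (open scoped MatrixOrder in CFC.sqrt_mul_sqrt_self Sb hSb.posSemidef.nonneg)
  have hdetS : IsUnit S.det := (Matrix.isUnit_iff_isUnit_det _).mp hS.isUnit
  have hdetSb : IsUnit Sb.det := (Matrix.isUnit_iff_isUnit_det _).mp hSb.isUnit
  have hdetR : IsUnit R.det := by
    have : R.det * R.det = S.det := by rw [← Matrix.det_mul, hRm]
    exact isUnit_of_mul_isUnit_left (this ▸ hdetS)
  have hdetRb : IsUnit Rb.det := by
    have : Rb.det * Rb.det = Sb.det := by rw [← Matrix.det_mul, hRbm]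
    exact isUnit_of_mul_isUnit_left (this ▸ hdetSb)
  haveI : Invertible R := R.invertibleOfIsUnitDet hdetR
  haveI : Invertible Rb := Rb.invertibleOfIsUnitDet hdetRb
  have key : ∀ (T : Matrix (Fin p) (Fin p) ℂ), Tᴴ = T → ∀ (W : Matrix (Fin p) (Fin M) ℂ),
      (T⁻¹ * W)ᴴ * (T⁻¹ * W) = Wᴴ * (T * T)⁻¹ * W := by
    intro T hTH W
    rw [Matrix.conjTranspose_mul, Matrix.conjTranspose_nonsing_inv, hTH, Matrix.mul_inv_rev]
    simp [Matrix.mul_assoc]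
  have hAB : (R⁻¹ * Z)ᴴ * (R⁻¹ * Z) = (Rb⁻¹ * Zb)ᴴ * (Rb⁻¹ * Zb) := by
    rw [key R hRH Z, key Rb hRbH Zb, hRm, hRbm, h]
  obtain ⟨U, hU1, hU2, hA⟩ := exists_unitary _ _ hAB
  have hdetU : IsUnit U.det := by
    apply IsUnit.of_mul_eq_one (a := U.det) Uᴴ.det
    rw [← Matrix.det_mul, hU2, Matrix.det_one]
  have hdetRbi : IsUnit Rb⁻¹.det := by
    apply IsUnit.of_mul_eq_one (a := Rb⁻¹.det) Rb.det
    rw [← Matrix.det_mul, Matrix.nonsing_inv_mul Rb hdetRb, Matrix.det_one]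
  refine ⟨R * U * Rb⁻¹, ?_, ?_, ?_⟩
  · rw [Matrix.det_mul, Matrix.det_mul]
    exact (hdetR.mul hdetU).mul hdetRbi
  · symm
    calc R * U * Rb⁻¹ * Zb = R * (U * (Rb⁻¹ * Zb)) := by rw [Matrix.mul_assoc, Matrix.mul_assoc]
      _ = R * (R⁻¹ * Z) := by rw [← hA]
      _ = Z := by rw [Matrix.mul_inv_cancel_left_of_invertible]
  · have hGH : (R * U * Rb⁻¹)ᴴ = Rb⁻¹ * (Uᴴ * R) := by
      rw [Matrix.conjTranspose_mul, Matrix.conjTranspose_mul,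
        Matrix.conjTranspose_nonsing_inv, hRbH, hRH]
    rw [hGH, ← hRbm]
    symm
    calc R * U * Rb⁻¹ * (Rb * Rb) * (Rb⁻¹ * (Uᴴ * R))
        = R * (U * (Rb⁻¹ * (Rb * (Rb * (Rb⁻¹ * (Uᴴ * R)))))) := by simp only [Matrix.mul_assoc]
      _ = R * (U * (Rb * (Rb⁻¹ * (Uᴴ * R)))) := by rw [Matrix.inv_mul_cancel_left_of_invertible]
      _ = R * (U * (Uᴴ * R)) := by rw [Matrix.mul_inv_cancel_left_of_invertible]
      _ = R * (U * Uᴴ * R) := by rw [Matrix.mul_assoc U]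
      _ = R * R := by rw [hU2, Matrix.one_mul]
      _ = S := hRm
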